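/- arXiv:0705.3202 — 2 statements merged into one kernel-verified Lean document; each statement's English description precedes it below -/
import Mathlib

section
/- With the coordinate transformation of the previous context, the Jacobian determinant det(∂a'_j/∂a_k) equals (1/(1 + (a_{l₁}+⋯+a_{l_m})s))². More precisely, for the map sending (a_{l₁},…,a_{l_m}) to (a'_{l₁},…,a'_{l_m}) with a'_{l_j} = a_{l_j}(1+(a_{l₁}+⋯+a_{l_{j-1}})s)/(1+(a_{l₁}+⋯+a_{l_j})s) and fixing all other coordinates, the Jacobian matrix is lower triangular with respect to the ordering l₁ < … < l_m when restricted to the varying coordinates, and its determinant equals ∏_{j=1}^m ((1+(a_{l₁}+⋯+a_{l_{j-1}})s)/(1+(a_{l₁}+⋯+a_{l_j})s))² = (1+(a_{l₁}+⋯+a_{l_m})s)^{-2}. -/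
open Finset

/-- The Jacobian of the coordinate transformation
`b = (a_{l₁},…,a_{l_m}) ↦ (a'_{l₁},…,a'_{l_m})`, where
`a'_{l_j} = a_{l_j}(1 + (a_{l₁}+⋯+a_{l_{j-1}})s)/(1 + (a_{l₁}+⋯+a_{l_j})s)`
(all other coordinates being fixed), is lower triangular with determinant
`∏_{j=1}^m ((1+(a_{l₁}+⋯+a_{l_{j-1}})s)/(1+(a_{l₁}+⋯+a_{l_j})s))²
  = (1+(a_{l₁}+⋯+a_{l_m})s)⁻²`. -/
theorem jacobian_lower_triangular_det (m : ℕ) (s : ℂ) (b : Fin m → ℂ)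
    (T : ℕ → (Fin m → ℂ) → ℂ)
    (hT : ∀ j c, T j c = ∑ i ∈ Finset.univ.filter (fun i : Fin m => (i : ℕ) < j), c i)
    (Φ : (Fin m → ℂ) → Fin m → ℂ)
    (hΦ : ∀ c (j : Fin m),
      Φ c j = c j * (1 + T j c * s) / (1 + T (j + 1) c * s))
    (hden : ∀ j : ℕ, j ≤ m → 1 + T j b * s ≠ 0)
    (J : Matrix (Fin m) (Fin m) ℂ)
    (hJ : ∀ j k : Fin m, J j k = fderiv ℂ (fun c => Φ c j) b (Pi.single k 1)) :
    (∀ j k : Fin m, (j : ℕ) < (k : ℕ) → J j k = 0) ∧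
    J.det = ∏ j : Fin m,
      ((1 + T j b * s) / (1 + T ((j : ℕ) + 1) b * s)) ^ 2 ∧
    J.det = (1 / (1 + T m b * s)) ^ 2 := by
  classical
  set f : ℕ → ℂ := fun n => 1 + T n b * s with hf
  set L : ℕ → ((Fin m → ℂ) →L[ℂ] ℂ) := fun n =>
    ∑ i ∈ Finset.univ.filter (fun i : Fin m => (i : ℕ) < n), ContinuousLinearMap.proj i with hLdef
  have hL : ∀ n, HasFDerivAt (fun c => T n c) (L n) b := by
    intro n
    have h1 : (fun c : Fin m → ℂ => T n c)
        = fun c => ∑ i ∈ Finset.univ.filter (fun i : Fin m => (i : ℕ) < n), c i :=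
      funext (hT n)
    rw [h1]
    exact HasFDerivAt.fun_sum fun i _ =>
      (ContinuousLinearMap.proj (R := ℂ) (φ := fun _ : Fin m => ℂ) i).hasFDerivAt
  have hv : ∀ n, HasFDerivAt (fun c => 1 + T n c * s) (s • L n) b := fun n =>
    ((hL n).mul_const s).const_add 1
  -- derivative of each Φ · j
  have key : ∀ j : Fin m, HasFDerivAt (fun c => Φ c j)
      ((b j * f j) • ((-(f ((j : ℕ) + 1) ^ 2)⁻¹) • (s • L ((j : ℕ) + 1)))
        + (f ((j : ℕ) + 1))⁻¹ • ((b j) • (s • L (j : ℕ)) + (f (j : ℕ)) • ContinuousLinearMap.proj j)) b := by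
    intro j
    have hfun : (fun c => Φ c j)
        = fun c => (c j * (1 + T j c * s)) * (1 + T ((j : ℕ) + 1) c * s)⁻¹ := by
      funext c; rw [hΦ c j, div_eq_mul_inv]
    rw [hfun]
    have hu : HasFDerivAt (fun c : Fin m → ℂ => c j)
        (ContinuousLinearMap.proj (R := ℂ) (φ := fun _ : Fin m => ℂ) j) b :=
      (ContinuousLinearMap.proj (R := ℂ) (φ := fun _ : Fin m => ℂ) j).hasFDerivAt
    have hnum : HasFDerivAt (fun c => c j * (1 + T (j : ℕ) c * s))
        ((b j) • (s • L (j : ℕ)) + (f (j : ℕ)) • ContinuousLinearMap.proj j) b :=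
      hu.mul (hv j)
    have hinvd : HasDerivAt (fun y : ℂ => y⁻¹) (-(f ((j : ℕ) + 1) ^ 2)⁻¹)
        ((fun c => 1 + T ((j : ℕ) + 1) c * s) b) :=
      hasDerivAt_inv (hden _ (Nat.succ_le_of_lt j.isLt))
    have hinv : HasFDerivAt (fun c => (1 + T ((j : ℕ) + 1) c * s)⁻¹)
        ((-(f ((j : ℕ) + 1) ^ 2)⁻¹) • (s • L ((j : ℕ) + 1))) b :=
      hinvd.comp_hasFDerivAt b (hv _)
    exact hnum.mul hinv
  -- value of L n on a basis vector
  have hLval : ∀ (n : ℕ) (k : Fin m),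
      (L n) (Pi.single k 1) = if (k : ℕ) < n then 1 else 0 := by
    intro n k
    rw [hLdef]
    simp only [ContinuousLinearMap.coe_sum', Finset.sum_apply, ContinuousLinearMap.proj_apply]
    rw [Finset.sum_congr rfl (fun i _ => Pi.single_apply k 1 i)]
    rw [Finset.sum_ite_eq' _ k (fun _ => (1 : ℂ))]
    simp
  -- entries of J
  have hT1 : ∀ j : Fin m, f ((j : ℕ) + 1) = f (j : ℕ) + b j * s := by
    intro j
    have : T ((j : ℕ) + 1) b = T (j : ℕ) b + b j := by
      rw [hT, hT]
      have hsplit : Finset.univ.filter (fun i : Fin m => (i : ℕ) < (j : ℕ) + 1)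
          = insert j (Finset.univ.filter (fun i : Fin m => (i : ℕ) < (j : ℕ))) := by
        ext i
        simp only [Finset.mem_filter, Finset.mem_univ, true_and, Finset.mem_insert,
          Nat.lt_succ_iff_lt_or_eq]
        constructor
        · rintro (h | h)
          · exact Or.inr h
          · exact Or.inl (Fin.ext h)
        · rintro (h | h)
          · exact Or.inr (by rw [h])
          · exact Or.inl h
      rw [hsplit, Finset.sum_insert (by simp)]
      ring
    simp only [hf, this]; ring
  have hJval : ∀ j k : Fin m, J j k =
      (b j * f j) * ((-(f ((j : ℕ) + 1) ^ 2)⁻¹) * (s * (if (k : ℕ) < (j : ℕ) + 1 then 1 else 0)))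
        + (f ((j : ℕ) + 1))⁻¹ * ((b j) * (s * (if (k : ℕ) < (j : ℕ) then 1 else 0))
            + (f (j : ℕ)) * (if j = k then 1 else 0)) := by
    intro j k
    rw [hJ j k, (key j).fderiv]
    simp only [ContinuousLinearMap.add_apply, ContinuousLinearMap.smul_apply,
      ContinuousLinearMap.proj_apply, hLval, smul_eq_mul]
    rw [Pi.single_apply]
  have hzero : ∀ j k : Fin m, (j : ℕ) < (k : ℕ) → J j k = 0 := by
    intro j k hjk
    rw [hJval j k]
    rw [if_neg (by omega), if_neg (by omega), if_neg (by
      intro h; rw [h] at hjk; omega)]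
    ring
  have hdiag : ∀ j : Fin m, J j j = ((f (j : ℕ)) / (f ((j : ℕ) + 1))) ^ 2 := by
    intro j
    rw [hJval j j]
    rw [if_pos (by omega), if_neg (by omega), if_pos rfl]
    rw [hT1 j]
    have h1 : f (j : ℕ) + b j * s ≠ 0 := by rw [← hT1 j]; exact hden _ (Nat.succ_le_of_lt j.isLt)
    field_simp
    ring
  have hdet : J.det = ∏ j : Fin m, (f (j : ℕ) / f ((j : ℕ) + 1)) ^ 2 := by
    rw [Matrix.det_of_lowerTriangular J (fun i j h => hzero i j h)]
    exact Finset.prod_congr rfl fun j _ => hdiag j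
  have h0 : f 0 = 1 := by simp [hf, hT]
  have htel : ∀ n, n ≤ m → ∏ i ∈ Finset.range n, f i / f (i + 1) = f 0 / f n := by
    intro n
    induction n with
    | zero => intro _; simp [h0]
    | succ n ih =>
      intro h
      have hn : f n ≠ 0 := hden n (by omega)
      have hn1 : f (n + 1) ≠ 0 := hden (n + 1) h
      rw [Finset.prod_range_succ, ih (by omega)]
      field_simp
  have hprod : ∏ j : Fin m, (f (j : ℕ) / f ((j : ℕ) + 1)) ^ 2 = (1 / f m) ^ 2 := by
    rw [Finset.prod_pow]
    congr 1
    rw [Fin.prod_univ_eq_prod_range (fun i => f i / f (i + 1)) m, htel m le_rfl, h0]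
  exact ⟨hzero, by rw [hdet], by rw [hdet, hprod]⟩
end

section
/- In SL₂(ℂ), for a, b ∈ ℂ* and h ∈ ℂ, the element g = x(a)·d(e^{h/2})·y(b)⁻¹ satisfies g·B₊·g⁻¹ = B₋ (i.e., g maps the Borel of upper triangular matrices to the Borel of lower triangular matrices under conjugation) if and only if a·b = e^h. Here x(a) = [[1,a],[0,1]], y(b) = [[1,0],[b,1]], d(c) = [[c,0],[0,1/c]], B₊ is the group of upper triangular matrices in SL₂ and B₋ the lower triangular ones. -/
open Matrix

noncomputable section

/-- x(a) = [[1,a],[0,1]]. -/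
def xMat (a : ℂ) : Matrix (Fin 2) (Fin 2) ℂ := !![1, a; 0, 1]

/-- y(b) = [[1,0],[b,1]]. -/
def yMat (b : ℂ) : Matrix (Fin 2) (Fin 2) ℂ := !![1, 0; b, 1]

/-- d(c) = [[c,0],[0,1/c]]. -/
def dMat (c : ℂ) : Matrix (Fin 2) (Fin 2) ℂ := !![c, 0; 0, c⁻¹]

/-- The Borel subgroup B₊ of upper triangular matrices in SL₂(ℂ). -/
def BorelPlus : Set (Matrix (Fin 2) (Fin 2) ℂ) :=
  {b | b.det = 1 ∧ b 1 0 = 0}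

/-- The Borel subgroup B₋ of lower triangular matrices in SL₂(ℂ). -/
def BorelMinus : Set (Matrix (Fin 2) (Fin 2) ℂ) :=
  {b | b.det = 1 ∧ b 0 1 = 0}

/-- For `g = x(a)·d(e^{h/2})·y(b)⁻¹` in SL₂(ℂ) with `a, b ∈ ℂ*`, we have
`g·B₊·g⁻¹ = B₋` if and only if `a·b = e^h`. -/
theorem sl2_mirror_fiber_condition (a b : ℂ) (h : ℂ) (ha : a ≠ 0) (hb : b ≠ 0) :
    (let g := xMat a * dMat (Complex.exp (h / 2)) * (yMat b)⁻¹
     (fun m => g * m * g⁻¹) '' BorelPlus = BorelMinus) ↔ a * b = Complex.exp h := by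
  simp only []
  set g : Matrix (Fin 2) (Fin 2) ℂ := xMat a * dMat (Complex.exp (h / 2)) * (yMat b)⁻¹ with hgdef
  set c : ℂ := Complex.exp (h / 2) with hcdef
  have hc : c ≠ 0 := Complex.exp_ne_zero _
  have hcc : c * c = Complex.exp h := by
    rw [hcdef, ← Complex.exp_add]; ring_nf
  have hyinv : (yMat b)⁻¹ = !![1, 0; -b, 1] := by
    rw [yMat, Matrix.inv_def, Matrix.det_fin_two_of, Matrix.adjugate_fin_two_of]
    simp
  have hg : g = !![c - a*b*c⁻¹, a*c⁻¹; -(b*c⁻¹), c⁻¹] := by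
    rw [hgdef, hyinv, xMat, dMat, Matrix.mul_fin_two, Matrix.mul_fin_two]
    congr 1 <;> ring
  have hdetg : g.det = 1 := by
    rw [hg, Matrix.det_fin_two_of]
    field_simp
    ring
  have hginv : g⁻¹ = !![c⁻¹, -(a*c⁻¹); b*c⁻¹, c - a*b*c⁻¹] := by
    rw [Matrix.inv_def, hdetg, hg, Matrix.adjugate_fin_two_of]
    simp
  constructor
  · intro heq
    have hmem : (fun m => g * m * g⁻¹) !![1,1;0,1] ∈ BorelMinus := by
      rw [← heq]
      exact Set.mem_image_of_mem _ ⟨by rw [Matrix.det_fin_two_of]; ring, rfl⟩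
    have h01 := hmem.2
    rw [show ((fun m => g * m * g⁻¹) !![(1:ℂ),1;0,1]) = g * !![1,1;0,1] * g⁻¹ from rfl, hginv, hg, Matrix.mul_fin_two, Matrix.mul_fin_two] at h01
    rw [show ((c - a*b*c⁻¹) * 1 + a*c⁻¹ * 0) * -(a*c⁻¹) + ((c - a*b*c⁻¹) * 1 + a*c⁻¹ * 1) * (c - a*b*c⁻¹) = (c - a*b*c⁻¹)^2 by ring] at h01
    have hp : c - a*b*c⁻¹ = 0 := by
      have := sq_eq_zero_iff.mp h01
      exact this
    have : a * b = c * c := by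
      field_simp at hp
      linear_combination -hp
    rw [this, hcc]
  · intro hab
    have habc : a * b = c * c := by rw [hab, hcc]
    have hp : c - a*b*c⁻¹ = 0 := by
      rw [habc]; field_simp; ring
    have hg' : g = !![0, a*c⁻¹; -(b*c⁻¹), c⁻¹] := by rw [hg, hp]
    have hginv' : g⁻¹ = !![c⁻¹, -(a*c⁻¹); b*c⁻¹, 0] := by rw [hginv, hp]
    ext m'
    constructor
    · rintro ⟨m, ⟨hmd, hm10⟩, rfl⟩
      have hme : m = !![m 0 0, m 0 1; 0, m 1 1] := by
        conv_lhs => rw [Matrix.eta_fin_two m]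
        rw [hm10]
      constructor
      · show (g * m * g⁻¹).det = 1
        rw [Matrix.det_mul, Matrix.det_mul, hdetg, hmd]
        rw [hginv', Matrix.det_fin_two_of]
        field_simp
        linear_combination habc
      · show (g * m * g⁻¹) 0 1 = 0
        rw [hme, hginv', hg', Matrix.mul_fin_two, Matrix.mul_fin_two]
        simp
    · rintro ⟨hmd, hm01⟩
      refine ⟨g⁻¹ * m' * g, ⟨?_, ?_⟩, ?_⟩
      · rw [Matrix.det_mul, Matrix.det_mul, hmd]
        rw [hginv', hg', Matrix.det_fin_two_of, Matrix.det_fin_two_of]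
        field_simp
        linear_combination (a*b + c*c) * habc
      · have hme : m' = !![m' 0 0, 0; m' 1 0, m' 1 1] := by
          conv_lhs => rw [Matrix.eta_fin_two m']
          rw [hm01]
        rw [hme, hginv', hg', Matrix.mul_fin_two, Matrix.mul_fin_two]
        simp
      · show g * (g⁻¹ * m' * g) * g⁻¹ = m'
        have hgg : g * g⁻¹ = 1 := by
          apply Matrix.mul_nonsing_inv
          rw [hdetg]; exact isUnit_one
        calc g * (g⁻¹ * m' * g) * g⁻¹ = (g * g⁻¹) * m' * (g * g⁻¹) := by
              noncomm_ring
          _ = m' := by rw [hgg, one_mul, mul_one]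


end
end
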